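/- Let s_A, s_C, s̃_A, s̃_C be positive reals with s_A ≤ Γ, s_C ≥ c_C > 0, |s_A − s̃_A| ≤ η c_C/2 and |s_C − s̃_C| ≤ c_C² η/(6Γ), where η ≤ min{γ/c_C, 3Γ/c_C}, and additionally s_A ≥ γ. Then s̃_A ≤ 3s_A/2 ≤ 3Γ/2, s̃_C ≥ s_C/2 ≥ c_C/2, and |s_A/s_C − s̃_A/s̃_C| ≤ η. -/

import Mathlib

/-- Perturbation estimate for quotients underlying `RAYL`:
if `γ ≤ s_A ≤ Γ`, `s_C ≥ c_C > 0`, `|s_A - s̃_A| ≤ η c_C/2`, `|s_C - s̃_C| ≤ c_C²η/(6Γ)`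
with `η ≤ min{γ/c_C, 3Γ/c_C}`, then `s̃_A ≤ 3s_A/2 ≤ 3Γ/2`, `s̃_C ≥ s_C/2 ≥ c_C/2`,
and `|s_A/s_C - s̃_A/s̃_C| ≤ η`. -/
theorem stmt16 (γ Γ cC η sA sC tA tC : ℝ)
    (hγ : 0 < γ) (hΓ : 0 < Γ) (hcC : 0 < cC)
    (hsA : 0 < sA) (hsC : 0 < sC) (htA : 0 < tA) (htC : 0 < tC)
    (hsAγ : γ ≤ sA) (hsAΓ : sA ≤ Γ) (hsCc : cC ≤ sC)
    (hη : η ≤ min (γ / cC) (3 * Γ / cC)) (hη0 : 0 < η)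
    (hApprox : |sA - tA| ≤ η * cC / 2) (hCapprox : |sC - tC| ≤ cC ^ 2 * η / (6 * Γ)) :
    (tA ≤ 3 * sA / 2 ∧ 3 * sA / 2 ≤ 3 * Γ / 2) ∧
      (sC / 2 ≤ tC ∧ cC / 2 ≤ sC / 2) ∧
      |sA / sC - tA / tC| ≤ η := by
  obtain ⟨hη1, hη2⟩ := le_min_iff.mp hη
  have hηc1 : η * cC ≤ γ := (le_div_iff₀ hcC).mp hη1
  have hηc2 : η * cC ≤ 3 * Γ := (le_div_iff₀ hcC).mp hη2
  obtain ⟨hA1, hA2⟩ := abs_le.mp hApprox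
  obtain ⟨hC1, hC2⟩ := abs_le.mp hCapprox
  have h6Γ : (0:ℝ) < 6 * Γ := by linarith
  have hC2' : (sC - tC) * (6 * Γ) ≤ cC ^ 2 * η := (le_div_iff₀ h6Γ).mp hC2
  have hC1' : (tC - sC) * (6 * Γ) ≤ cC ^ 2 * η := by
    have : tC - sC ≤ cC ^ 2 * η / (6 * Γ) := by linarith [neg_le.mp hC1]
    exact (le_div_iff₀ h6Γ).mp this
  have h1 : tA ≤ 3 * sA / 2 := by nlinarith
  have h3 : sC / 2 ≤ tC := by nlinarith
  refine ⟨⟨h1, by linarith⟩, ⟨h3, by linarith⟩, ?_⟩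
  have hSC : (0:ℝ) < sC * tC := mul_pos hsC htC
  rw [div_sub_div _ _ hsC.ne' htC.ne', abs_div, abs_of_pos hSC, div_le_iff₀ hSC, abs_le]
  have htA3 : tA ≤ 3 * Γ / 2 := by linarith
  have k1 : cC * (η * tC * Γ) ≤ sC * (η * tC * Γ) :=
    mul_le_mul_of_nonneg_right hsCc (by positivity)
  have k2 : cC * cC * (3 / 2 * Γ * η) ≤ sC * (2 * tC) * (3 / 2 * Γ * η) :=
    mul_le_mul_of_nonneg_right (mul_le_mul hsCc (by linarith) hcC.le hsC.le) (by positivity)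
  have k3 : tA * (cC ^ 2 * η) ≤ 3 * Γ / 2 * (cC ^ 2 * η) :=
    mul_le_mul_of_nonneg_right htA3 (by positivity)
  have u1 := mul_le_mul_of_nonneg_right hA2 (mul_pos htC h6Γ).le
  have u2 := mul_le_mul_of_nonneg_left hC1' htA.le
  have l1 := mul_le_mul_of_nonneg_right hA1 (mul_pos htC h6Γ).le
  have l2 := mul_le_mul_of_nonneg_left hC2' htA.le
  constructor
  · have : -(η * (sC * tC)) * (6 * Γ) ≤ (sA * tC - sC * tA) * (6 * Γ) := by linarith [k1, k2, k3, u1, u2, l1, l2]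
    exact le_of_mul_le_mul_right this h6Γ
  · have : (sA * tC - sC * tA) * (6 * Γ) ≤ η * (sC * tC) * (6 * Γ) := by linarith [k1, k2, k3, u1, u2, l1, l2]
    exact le_of_mul_le_mul_right this h6Γ
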